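/- arXiv:1401.3383 — 3 statements merged into one kernel-verified Lean document; each statement's English description precedes it below -/
import Mathlib

section
/- For the strict Pareto distribution with distribution function F(x) = 1 - (x/C)^(-1/γ) for x > C, where C > 0 and γ > 0, the log probability weighted moment l_r := E[(ln X)(1 - F(X))^r] satisfies l_r = ln(C)/(1+r) + γ/(1+r)^2 for every non-negative real r. -/
open Real Set Filter MeasureTheory

/-- For the strict Pareto model with d.f. `F(x) = 1 - (x/C)^(-1/γ)` for `x > C`
(density `(1/(γC))·(x/C)^(-1/γ-1)` on `(C, ∞)`), the log probability weighted moment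
`l_r = E[(ln X)(1-F(X))^r]` equals `ln C/(1+r) + γ/(1+r)²` for every real `r ≥ 0`. -/
theorem pareto_log_pwm (C γ r : ℝ) (hC : 0 < C) (hγ : 0 < γ) (hr : 0 ≤ r) :
    ∫ x in Ioi C, (Real.log x) * ((x / C) ^ (-(1 / γ))) ^ r *
      ((1 / (γ * C)) * (x / C) ^ (-(1 / γ) - 1)) =
      Real.log C / (1 + r) + γ / (1 + r) ^ 2 := by
  have h1r : (0 : ℝ) < 1 + r := by linarith
  set s : ℝ := (1 + r) / γ with hs
  have hspos : 0 < s := div_pos h1r hγ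
  set g : ℝ → ℝ := fun x => (1 / (γ * C)) * (x / C) ^ (-s - 1) with hgdef
  set h : ℝ → ℝ := fun x => (1 / (γ * C)) * Real.log (x / C) * (x / C) ^ (-s - 1) with hhdef
  set G : ℝ → ℝ := fun x => -(1 / (1 + r)) * (x / C) ^ (-s) with hGdef
  set H : ℝ → ℝ := fun x =>
    -(Real.log (x / C) / (1 + r) + γ / (1 + r) ^ 2) * (x / C) ^ (-s) with hHdef
  -- derivatives on Ici C
  have hdG : ∀ x ∈ Ici C, HasDerivAt G (g x) x := by
    intro x hx
    have hxC : 0 < x / C := div_pos (lt_of_lt_of_le hC hx) hC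
    have hd : HasDerivAt (fun y : ℝ => y / C) (1 / C) x := by
      simpa using (hasDerivAt_id x).div_const C
    have hp : HasDerivAt (fun y : ℝ => (y / C) ^ (-s))
        ((-s) * (x / C) ^ (-s - 1) * (1 / C)) x := by
      have := (Real.hasDerivAt_rpow_const (x := x / C) (p := -s) (Or.inl hxC.ne')).comp x hd
      exact this
    have := hp.const_mul (-(1 / (1 + r)))
    refine this.congr_deriv ?_
    simp only [hgdef, hs]
    field_simp
  have key : ∀ x, 0 < x / C → (x / C) ^ (-s) = (x / C) * (x / C) ^ (-s - 1) := by
    intro x hxC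
    have e : x / C * (x / C) ^ (-s - 1) = (x / C) ^ (1 : ℝ) * (x / C) ^ (-s - 1) := by
      rw [Real.rpow_one]
    rw [e, ← Real.rpow_add hxC]
    congr 1
    ring
  have hdH : ∀ x ∈ Ici C, HasDerivAt H (h x) x := by
    intro x hx
    have hx0 : 0 < x := lt_of_lt_of_le hC hx
    have hxC : 0 < x / C := div_pos hx0 hC
    have hd : HasDerivAt (fun y : ℝ => y / C) (1 / C) x := by
      simpa using (hasDerivAt_id x).div_const C
    have hlog : HasDerivAt (fun y : ℝ => Real.log (y / C)) ((x / C)⁻¹ * (1 / C)) x := by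
      have := (Real.hasDerivAt_log hxC.ne').comp x hd
      exact this
    have ha : HasDerivAt (fun y : ℝ => -(Real.log (y / C) / (1 + r) + γ / (1 + r) ^ 2))
        (-((x / C)⁻¹ * (1 / C) / (1 + r))) x :=
      ((hlog.div_const (1 + r)).add_const (γ / (1 + r) ^ 2)).neg
    have hp : HasDerivAt (fun y : ℝ => (y / C) ^ (-s))
        ((-s) * (x / C) ^ (-s - 1) * (1 / C)) x := by
      have := (Real.hasDerivAt_rpow_const (x := x / C) (p := -s) (Or.inl hxC.ne')).comp x hd
      exact this
    have := ha.mul hp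
    refine this.congr_deriv ?_
    rw [key x hxC]
    have hxCne : x / C ≠ 0 := hxC.ne'
    simp only [hhdef, hs]
    field_simp
    ring
  -- limits at infinity
  have hdivtop : Tendsto (fun x : ℝ => x / C) atTop atTop :=
    tendsto_id.atTop_div_const hC
  have hrpow0 : Tendsto (fun x : ℝ => (x / C) ^ (-s)) atTop (nhds 0) :=
    (tendsto_rpow_neg_atTop hspos).comp hdivtop
  have hlogrpow0 : Tendsto (fun x : ℝ => Real.log (x / C) * (x / C) ^ (-s)) atTop (nhds 0) := by
    have h1 : Tendsto (fun u : ℝ => Real.log u / u ^ s) atTop (nhds 0) :=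
      (isLittleO_log_rpow_atTop hspos).tendsto_div_nhds_zero
    have h2 : Tendsto (fun u : ℝ => Real.log u * u ^ (-s)) atTop (nhds 0) := by
      apply h1.congr'
      filter_upwards [eventually_gt_atTop (0 : ℝ)] with u hu
      rw [Real.rpow_neg hu.le, div_eq_mul_inv]
    exact h2.comp hdivtop
  have hGtop : Tendsto G atTop (nhds 0) := by
    have := hrpow0.const_mul (-(1 / (1 + r)))
    rw [mul_zero] at this
    exact this
  have hHtop : Tendsto H atTop (nhds 0) := by
    have h1 := (hlogrpow0.const_mul (1 / (1 + r))).neg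
    have h2 := (hrpow0.const_mul (γ / (1 + r) ^ 2)).neg
    have := h1.add h2
    simp only [neg_zero, mul_zero, add_zero] at this
    apply this.congr
    intro x
    simp only [hHdef]
    ring
  -- nonnegativity
  have hgpos : ∀ x ∈ Ioi C, 0 ≤ g x := by
    intro x hx
    have hxC : 0 ≤ x / C := (div_pos (hC.trans hx) hC).le
    simp only [hgdef]
    positivity
  have hhpos : ∀ x ∈ Ioi C, 0 ≤ h x := by
    intro x hx
    have hx1 : 1 ≤ x / C := (one_le_div hC).2 (le_of_lt hx)
    have hlognn : 0 ≤ Real.log (x / C) := Real.log_nonneg hx1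
    have hxC : 0 ≤ x / C := by linarith
    simp only [hhdef]
    positivity
  have hIg : ∫ x in Ioi C, g x = 0 - G C :=
    integral_Ioi_of_hasDerivAt_of_nonneg' hdG hgpos hGtop
  have hIh : ∫ x in Ioi C, h x = 0 - H C :=
    integral_Ioi_of_hasDerivAt_of_nonneg' hdH hhpos hHtop
  have hgint : IntegrableOn g (Ioi C) :=
    integrableOn_Ioi_deriv_of_nonneg' hdG hgpos hGtop
  have hhint : IntegrableOn h (Ioi C) :=
    integrableOn_Ioi_deriv_of_nonneg' hdH hhpos hHtop
  -- rewrite the integrand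
  have hfg : ∀ x ∈ Ioi C, (Real.log x) * ((x / C) ^ (-(1 / γ))) ^ r *
      ((1 / (γ * C)) * (x / C) ^ (-(1 / γ) - 1)) = Real.log C * g x + h x := by
    intro x hx
    have hx0 : 0 < x := hC.trans hx
    have hxC : 0 < x / C := div_pos hx0 hC
    have e1 : ((x / C) ^ (-(1 / γ))) ^ r = (x / C) ^ (-(1 / γ) * r) :=
      (Real.rpow_mul hxC.le _ _).symm
    have e2 : (x / C) ^ (-(1 / γ) * r) * (x / C) ^ (-(1 / γ) - 1) = (x / C) ^ (-s - 1) := by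
      rw [← Real.rpow_add hxC]
      congr 1
      rw [hs]
      field_simp [hs]
      ring
    have e3 : Real.log (x / C) = Real.log x - Real.log C := Real.log_div hx0.ne' hC.ne'
    simp only [hgdef, hhdef, e3]
    rw [e1]
    calc Real.log x * (x / C) ^ (-(1 / γ) * r) * (1 / (γ * C) * (x / C) ^ (-(1 / γ) - 1))
        = Real.log x * (1 / (γ * C)) *
            ((x / C) ^ (-(1 / γ) * r) * (x / C) ^ (-(1 / γ) - 1)) := by ring
      _ = Real.log x * (1 / (γ * C)) * (x / C) ^ (-s - 1) := by rw [e2]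
      _ = _ := by ring
  rw [setIntegral_congr_fun measurableSet_Ioi hfg]
  rw [integral_add (hgint.const_mul _) hhint, integral_const_mul, hIg, hIh]
  have hCC : C / C = 1 := div_self hC.ne'
  simp only [hGdef, hHdef, hCC, Real.one_rpow, Real.log_one]
  field_simp
  ring
end

section
/- Let ρ < 0. Then lim_{k→∞} (1/k) ∑_{i=1}^k (2 - 4(i-1)/(k-1)) · ((i/k)^{-ρ} - 1)/ρ = 2/((1-ρ)(2-ρ)). -/
open Finset Filter

lemma riemann_rpow (a : ℝ) (ha : 0 < a) :
    Tendsto (fun k : ℕ => (1 / (k : ℝ)) * ∑ i ∈ Finset.Icc 1 k, ((i : ℝ) / k) ^ a)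
      atTop (nhds (1 / (a + 1))) := by
  set f : ℝ → ℝ := fun x => x ^ a with hf
  have key : ∀ k : ℕ, 1 ≤ k →
      1 / (a+1) ≤ (1 / (k : ℝ)) * ∑ i ∈ Finset.Icc 1 k, ((i : ℝ) / k) ^ a ∧
      (1 / (k : ℝ)) * ∑ i ∈ Finset.Icc 1 k, ((i : ℝ) / k) ^ a ≤ 1 / (a+1) + 1 / k := by
    intro k hk
    have hkpos : (0:ℝ) < (k:ℝ) := by exact_mod_cast hk
    have hmono : MonotoneOn f (Set.Icc (((0:ℕ)):ℝ) (((0:ℕ):ℝ) + (k:ℕ))) := by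
      intro x hx y hy hxy
      exact Real.rpow_le_rpow (by simpa using hx.1) hxy ha.le
    have hmono' : MonotoneOn f (Set.Icc (((0:ℕ)):ℝ) (((k:ℕ)):ℝ)) := by
      simpa using hmono
    have hint : ∫ x in (((0:ℕ)):ℝ)..(((k:ℕ)):ℝ), f x = (k:ℝ)^(a+1)/(a+1) := by
      rw [hf]
      rw [integral_rpow (Or.inl (by linarith))]
      push_cast
      rw [Real.zero_rpow (by linarith)]
      ring
    set S : ℝ := ∑ i ∈ Finset.Icc 1 k, (i:ℝ) ^ a with hS
    have hshift : S = ∑ i ∈ Finset.range k, ((i:ℝ)+1) ^ a := by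
      rw [hS, ← Finset.Ico_add_one_right_eq_Icc, Finset.sum_Ico_eq_sum_range]
      simp [add_comm]
    have hlow : (k:ℝ)^(a+1)/(a+1) ≤ S := by
      have := hmono'.integral_le_sum_Ico (Nat.zero_le k)
      rw [hint] at this
      refine this.trans_eq ?_
      rw [hshift, Nat.Ico_zero_eq_range]
      push_cast
      rfl
    have hup : S ≤ (k:ℝ)^(a+1)/(a+1) + (k:ℝ)^a := by
      have h := hmono'.sum_le_integral_Ico (Nat.zero_le k)
      rw [hint] at h
      have h2 : ∑ i ∈ Finset.Ico 0 k, f (i:ℕ) = S - (k:ℝ)^a := by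
        rw [Nat.Ico_zero_eq_range]
        have e1 : ∑ i ∈ Finset.range (k+1), f (i:ℕ) = ∑ i ∈ Finset.range k, f (i:ℕ) + f (k:ℕ) :=
          Finset.sum_range_succ _ _
        have e2 : ∑ i ∈ Finset.range (k+1), f (i:ℕ) = ∑ i ∈ Finset.range k, f ((i+1:ℕ)) + f ((0:ℕ)) :=
          Finset.sum_range_succ' _ _
        have e3 : ∑ i ∈ Finset.range k, f ((i+1:ℕ)) = S := by
          rw [hshift]; push_cast; rfl
        have e4 : f ((0:ℕ)) = 0 := by simp [hf, Real.zero_rpow (ne_of_gt ha)]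
        have e5 : f ((k:ℕ)) = (k:ℝ)^a := rfl
        rw [e3, e4, add_zero] at e2
        rw [e2, e5] at e1
        linarith
      rw [h2] at h
      linarith
    have hexpr : (1 / (k : ℝ)) * ∑ i ∈ Finset.Icc 1 k, ((i : ℝ) / k) ^ a
        = S / (k:ℝ)^(a+1) := by
      rw [hS, Finset.mul_sum, Finset.sum_div]
      refine Finset.sum_congr rfl fun i hi => ?_
      rw [Real.div_rpow (Nat.cast_nonneg i) hkpos.le,
        Real.rpow_add hkpos a 1, Real.rpow_one]
      field_simp
    have hkpow : (0:ℝ) < (k:ℝ)^(a+1) := Real.rpow_pos_of_pos hkpos _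
    constructor
    · rw [hexpr, le_div_iff₀ hkpow]
      calc 1/(a+1) * (k:ℝ)^(a+1) = (k:ℝ)^(a+1)/(a+1) := by ring
        _ ≤ S := hlow
    · rw [hexpr, div_le_iff₀ hkpow]
      have hfrac : (k:ℝ)^a = (1/(k:ℝ)) * (k:ℝ)^(a+1) := by
        rw [Real.rpow_add hkpos a 1, Real.rpow_one]
        field_simp
      calc S ≤ (k:ℝ)^(a+1)/(a+1) + (k:ℝ)^a := hup
        _ = (1/(a+1) + 1/(k:ℝ)) * (k:ℝ)^(a+1) := by rw [hfrac]; ring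
  have hlim : Tendsto (fun k : ℕ => 1/(a+1) + 1/(k:ℝ)) atTop (nhds (1/(a+1))) := by
    have := tendsto_one_div_atTop_nhds_zero_nat (𝕜 := ℝ)
    simpa using tendsto_const_nhds.add this
  refine tendsto_of_tendsto_of_tendsto_of_le_of_le' tendsto_const_nhds hlim ?_ ?_
  · filter_upwards [eventually_ge_atTop 1] with k hk using (key k hk).1
  · filter_upwards [eventually_ge_atTop 1] with k hk using (key k hk).2

lemma sum_Icc_id_real (k : ℕ) : ∑ i ∈ Finset.Icc 1 k, (i:ℝ) = k*(k+1)/2 := by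
  induction k with
  | zero => simp
  | succ n ih =>
    rw [Finset.sum_Icc_succ_top (by omega), ih]
    push_cast; ring

/-- For `ρ < 0`,
`(1/k) ∑_{i=1}^k (2 - 4(i-1)/(k-1)) · ((i/k)^{-ρ} - 1)/ρ → 2/((1-ρ)(2-ρ))` as `k → ∞`. -/
theorem plpwm_bias_limit (ρ : ℝ) (hρ : ρ < 0) :
    Tendsto (fun k : ℕ => (1 / (k : ℝ)) * ∑ i ∈ Finset.Icc 1 k,
        (2 - 4 * ((i : ℝ) - 1) / ((k : ℝ) - 1)) * (((i : ℝ) / (k : ℝ)) ^ (-ρ) - 1) / ρ)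
      atTop (nhds (2 / ((1 - ρ) * (2 - ρ)))) := by
  have hρ0 : ρ ≠ 0 := ne_of_lt hρ
  have hs0 : 0 < -ρ := by linarith
  have h1ρ : (1:ℝ) - ρ ≠ 0 := by linarith
  have h2ρ : (2:ℝ) - ρ ≠ 0 := by linarith
  have hA := riemann_rpow (-ρ) hs0
  have hB := riemann_rpow (-ρ + 1) (by linarith)
  have hc : Tendsto (fun k : ℕ => ((k:ℝ) - 1)⁻¹) atTop (nhds 0) := by
    have h1 : Tendsto (fun k : ℕ => (k:ℝ) - 1) atTop atTop := by
      simpa [sub_eq_add_neg] using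
        tendsto_atTop_add_const_right atTop (-1 : ℝ) tendsto_natCast_atTop_atTop
    exact tendsto_inv_atTop_zero.comp h1
  have hG : Tendsto (fun k : ℕ =>
      (1/ρ) * ((2 + 4 * ((k:ℝ)-1)⁻¹) * ((1 / (k : ℝ)) * ∑ i ∈ Finset.Icc 1 k, ((i : ℝ) / k) ^ (-ρ))
        - (4 + 4 * ((k:ℝ)-1)⁻¹) * ((1 / (k : ℝ)) * ∑ i ∈ Finset.Icc 1 k, ((i : ℝ) / k) ^ (-ρ + 1))))
      atTop (nhds ((1/ρ) * ((2 + 4 * 0) * (1/(-ρ+1)) - (4 + 4 * 0) * (1/(-ρ+1+1))))) := by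
    exact tendsto_const_nhds.mul
      (((tendsto_const_nhds.add (hc.const_mul 4)).mul hA).sub
        ((tendsto_const_nhds.add (hc.const_mul 4)).mul hB))
  have hval : (1/ρ) * ((2 + 4 * 0) * (1/(-ρ+1)) - (4 + 4 * 0) * (1/(-ρ+1+1)))
      = 2 / ((1 - ρ) * (2 - ρ)) := by
    have e1 : -ρ + 1 = 1 - ρ := by ring
    have e2 : -ρ + 1 + 1 = 2 - ρ := by ring
    rw [e2, e1]
    field_simp
    ring
  rw [hval] at hG
  refine hG.congr' ?_
  filter_upwards [eventually_ge_atTop 2] with k hk2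
  have hk0 : (k:ℝ) ≠ 0 := by
    have : (2:ℝ) ≤ (k:ℝ) := by exact_mod_cast hk2
    linarith
  have hk1 : (k:ℝ) - 1 ≠ 0 := by
    have : (2:ℝ) ≤ (k:ℝ) := by exact_mod_cast hk2
    linarith
  have hterm : ∀ i ∈ Finset.Icc 1 k,
      (2 - 4 * ((i : ℝ) - 1) / ((k : ℝ) - 1)) * (((i : ℝ) / (k : ℝ)) ^ (-ρ) - 1) / ρ
      = (1/ρ) * ((2 + 4 * ((k:ℝ)-1)⁻¹) * ((i:ℝ)/k) ^ (-ρ))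
        - (1/ρ) * ((4 * ((k:ℝ)-1)⁻¹ * (k:ℝ)) * ((i:ℝ)/k) ^ (-ρ + 1))
        + ((1/ρ) * (4 * ((k:ℝ)-1)⁻¹) * (i:ℝ) - (1/ρ) * (2 + 4 * ((k:ℝ)-1)⁻¹)) := by
    intro i hi
    have hi1 : 1 ≤ i := (Finset.mem_Icc.mp hi).1
    have hipos : (0:ℝ) < (i:ℝ) := by exact_mod_cast hi1
    have hik : ((i:ℝ)/(k:ℝ)) ≠ 0 := by
      apply div_ne_zero (ne_of_gt hipos) hk0
    rw [Real.rpow_add_one hik (-ρ)]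
    field_simp
    ring
  rw [Finset.sum_congr rfl hterm]
  rw [Finset.sum_add_distrib, Finset.sum_sub_distrib, Finset.sum_sub_distrib]
  simp only [← Finset.mul_sum]
  rw [Finset.sum_const, Nat.card_Icc, nsmul_eq_mul, sum_Icc_id_real]
  have hcard : ((k + 1 - 1 : ℕ) : ℝ) = (k:ℝ) := by
    have : k + 1 - 1 = k := by omega
    rw [this]
  rw [hcard]
  field_simp
  ring
end

section
/- The function AREFF(ρ) = ((3/4)^{-ρ}(1 - ρ/2))^{1/(1-2ρ)}, ρ < 0, has a unique critical point, which is a maximum, located in the interval (-0.8, -0.6). -/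
open Set Real

noncomputable def aL : ℝ := Real.log (4/3)
noncomputable def hfun (ρ : ℝ) : ℝ :=
  (aL - 1/(2-ρ)) * (1-2*ρ) + 2*(ρ*aL + Real.log (1-ρ/2))
noncomputable def Gfun (ρ : ℝ) : ℝ := (ρ*aL + Real.log (1-ρ/2)) / (1-2*ρ)

lemma hasDerivAt_N {ρ : ℝ} (hρ : ρ < 2) :
    HasDerivAt (fun x => x*aL + Real.log (1-x/2)) (aL - 1/(2-ρ)) ρ := by
  have h1 : (1:ℝ) - ρ/2 ≠ 0 := by linarith
  have h2 : (2:ℝ) - ρ ≠ 0 := by linarith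
  have hin : HasDerivAt (fun x : ℝ => 1 - x/2) (-(1/2)) ρ := by
    simpa using ((hasDerivAt_id ρ).div_const 2).const_sub 1
  have hlog : HasDerivAt (fun x => Real.log (1-x/2)) ((1-ρ/2)⁻¹ * (-(1/2))) ρ :=
    by have := (Real.hasDerivAt_log h1).comp ρ hin; exact this
  have := ((hasDerivAt_id ρ).mul_const aL).add hlog
  refine this.congr_deriv ?_
  field_simp [h1, h2]
  ring

lemma hasDerivAt_h {ρ : ℝ} (hρ : ρ < 2) :
    HasDerivAt hfun (-(1-2*ρ)/(2-ρ)^2) ρ := by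
  have h2 : (2:ℝ) - ρ ≠ 0 := by linarith
  have hin : HasDerivAt (fun x : ℝ => 2 - x) (-1) ρ := by
    simpa using (hasDerivAt_id ρ).const_sub 2
  have hinv := (hin.inv h2).const_sub aL
  have hD : HasDerivAt (fun x : ℝ => 1 - 2*x) (-2) ρ := by
    simpa using ((hasDerivAt_id ρ).const_mul 2).const_sub 1
  have hprod := hinv.mul hD
  have hN := (hasDerivAt_N hρ).const_mul 2
  have := hprod.add hN
  refine (this.congr_of_eventuallyEq (Filter.EventuallyEq.of_eq ?_)).congr_deriv ?_
  · funext x; simp [hfun, one_div]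
  · simp only [Pi.inv_apply]
    field_simp [h2]
    ring

lemma hasDerivAt_G {ρ : ℝ} (hρ : ρ < 1/2) :
    HasDerivAt Gfun (hfun ρ / (1-2*ρ)^2) ρ := by
  have hD : HasDerivAt (fun x : ℝ => 1 - 2*x) (-2) ρ := by
    simpa using ((hasDerivAt_id ρ).const_mul 2).const_sub 1
  have hDne : (1:ℝ) - 2*ρ ≠ 0 := by linarith
  have := (hasDerivAt_N (by linarith : ρ < 2)).div hD hDne
  refine this.congr_deriv ?_
  simp only [hfun]
  ring

lemma h_anti : StrictAntiOn hfun (Iio (1/2 : ℝ)) := by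
  apply strictAntiOn_of_deriv_neg (convex_Iio _)
  · exact fun x hx => (hasDerivAt_h (by simp at hx; linarith : x < 2)).continuousAt.continuousWithinAt
  · intro x hx
    rw [interior_Iio] at hx
    simp only [mem_Iio] at hx
    rw [(hasDerivAt_h (by linarith : x < 2)).deriv]
    have h1 : (0:ℝ) < 1 - 2*x := by linarith
    have h2 : (0:ℝ) < (2-x)^2 := by nlinarith
    exact div_neg_of_neg_of_pos (by linarith) h2

example : True := trivial

lemma log1 : (13:ℝ)/14 < Real.log (4/3) + 2 * Real.log (7/5) := by
  have key : Real.exp (13/14) < 196/75 := by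
    have e1 : Real.exp (13/14) ^ (14:ℕ) = Real.exp 1 ^ (13:ℕ) := by
      rw [← Real.exp_nat_mul, ← Real.exp_nat_mul]; norm_num
    have e2 : Real.exp 1 ^ (13:ℕ) < ((196:ℝ)/75) ^ (14:ℕ) := by
      calc Real.exp 1 ^ (13:ℕ) < 2.7182818286 ^ (13:ℕ) :=
            pow_lt_pow_left₀ Real.exp_one_lt_d9 (Real.exp_pos 1).le (by norm_num)
        _ < ((196:ℝ)/75) ^ (14:ℕ) := by norm_num
    have := e1 ▸ e2
    exact lt_of_pow_lt_pow_left₀ 14 (by norm_num) this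
  have e3 : Real.log (4/3) + 2 * Real.log (7/5) = Real.log (196/75) := by
    rw [show (196:ℝ)/75 = (4/3) * (7/5)^(2:ℕ) by norm_num,
      Real.log_mul (by norm_num) (by norm_num), Real.log_pow]
    push_cast; ring
  rw [e3]
  exact (Real.lt_log_iff_exp_lt (by norm_num)).2 key

lemma log2 : Real.log (4/3) + 2 * Real.log (13/10) < 11/13 := by
  have key : (169:ℝ)/75 < Real.exp (11/13) := by
    have e1 : Real.exp (11/13) ^ (13:ℕ) = Real.exp 1 ^ (11:ℕ) := by
      rw [← Real.exp_nat_mul, ← Real.exp_nat_mul]; norm_num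
    have e2 : ((169:ℝ)/75) ^ (13:ℕ) < Real.exp 1 ^ (11:ℕ) := by
      calc ((169:ℝ)/75) ^ (13:ℕ) < 2.7182818283 ^ (11:ℕ) := by norm_num
        _ < Real.exp 1 ^ (11:ℕ) :=
            pow_lt_pow_left₀ Real.exp_one_gt_d9 (by norm_num) (by norm_num)
    have := e1 ▸ e2
    exact lt_of_pow_lt_pow_left₀ 13 (Real.exp_pos _).le this
  have e3 : Real.log (4/3) + 2 * Real.log (13/10) = Real.log (169/75) := by
    rw [show (169:ℝ)/75 = (4/3) * (13/10)^(2:ℕ) by norm_num,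
      Real.log_mul (by norm_num) (by norm_num), Real.log_pow]
    push_cast; ring
  rw [e3]
  exact (Real.log_lt_iff_lt_exp (by norm_num)).2 key

lemma h_neg8 : 0 < hfun (-0.8) := by
  have e : hfun (-0.8) = Real.log (4/3) + 2 * Real.log (7/5) - 13/14 := by
    have e7 : (1:ℝ) - (-0.8)/2 = 7/5 := by norm_num
    simp only [hfun, aL, e7]
    ring
  rw [e]
  linarith [log1]

lemma h_neg6 : hfun (-0.6) < 0 := by
  have e : hfun (-0.6) = Real.log (4/3) + 2 * Real.log (13/10) - 11/13 := by
    have e7 : (1:ℝ) - (-0.6)/2 = 13/10 := by norm_num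
    simp only [hfun, aL, e7]
    ring
  rw [e]
  linarith [log2]

lemma exists_root : ∃ ρc ∈ Ioo (-0.8:ℝ) (-0.6), hfun ρc = 0 := by
  have hcont : ContinuousOn hfun (Icc (-0.8:ℝ) (-0.6)) := fun x hx =>
    (hasDerivAt_h (lt_of_le_of_lt hx.2 (by norm_num))).continuousAt.continuousWithinAt
  have h0 : (0:ℝ) ∈ Ioo (hfun (-0.6)) (hfun (-0.8)) := ⟨h_neg6, h_neg8⟩
  obtain ⟨ρc, hmem, heq⟩ := intermediate_value_Ioo' (by norm_num) hcont h0
  exact ⟨ρc, hmem, heq⟩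

lemma AREFF_eq {ρ : ℝ} (hρ : ρ < 1/2) :
    (((3/4:ℝ) ^ (-ρ)) * (1 - ρ/2)) ^ (1/(1-2*ρ)) = Real.exp (Gfun ρ) := by
  have h1 : (0:ℝ) < 1 - ρ/2 := by linarith
  have hb : (0:ℝ) < (3/4:ℝ) ^ (-ρ) := Real.rpow_pos_of_pos (by norm_num) _
  have hx : (0:ℝ) < (3/4:ℝ)^(-ρ) * (1-ρ/2) := mul_pos hb h1
  rw [Real.rpow_def_of_pos hx, Real.log_mul (ne_of_gt hb) (ne_of_gt h1),
    Real.log_rpow (by norm_num)]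
  congr 1
  have hl : Real.log (3/4 : ℝ) = - aL := by
    rw [aL, ← Real.log_inv]; norm_num
  rw [hl]
  simp only [Gfun]
  ring

lemma deriv_AREFF {ρ : ℝ} (hρ : ρ < 1/2) :
    deriv (fun ρ => (((3/4:ℝ) ^ (-ρ)) * (1 - ρ/2)) ^ (1/(1-2*ρ))) ρ
      = Real.exp (Gfun ρ) * (hfun ρ / (1-2*ρ)^2) := by
  have hev : (fun ρ => (((3/4:ℝ)^(-ρ)) * (1-ρ/2)) ^ (1/(1-2*ρ)))
      =ᶠ[nhds ρ] fun x => Real.exp (Gfun x) := by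
    filter_upwards [Iio_mem_nhds hρ] with x hx
    exact AREFF_eq hx
  rw [hev.deriv_eq]
  exact ((hasDerivAt_G hρ).exp).deriv

/-- `AREFF(ρ) = ((3/4)^{-ρ}(1-ρ/2))^{1/(1-2ρ)}`, `ρ < 0`, has a unique critical point,
which is a maximum, located in `(-0.8, -0.6)`. -/
theorem areff_unique_max :
    let AREFF : ℝ → ℝ := fun ρ => (((3 / 4 : ℝ) ^ (-ρ)) * (1 - ρ / 2)) ^ (1 / (1 - 2 * ρ))
    ∃ ρc : ℝ, ρc ∈ Ioo (-0.8 : ℝ) (-0.6 : ℝ) ∧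
      (∀ ρ : ℝ, ρ < 0 → (deriv AREFF ρ = 0 ↔ ρ = ρc)) ∧
      ∀ ρ : ℝ, ρ < 0 → AREFF ρ ≤ AREFF ρc := by
  intro AREFF
  obtain ⟨ρc, hmem, hroot⟩ := exists_root
  have hρc_half : ρc < 1/2 := lt_trans hmem.2 (by norm_num)
  have hρc_neg : ρc < 0 := lt_trans hmem.2 (by norm_num)
  refine ⟨ρc, hmem, ?_, ?_⟩
  · intro ρ hρ
    have hhalf : ρ < 1/2 := by linarith
    have hd : deriv AREFF ρ = Real.exp (Gfun ρ) * (hfun ρ / (1-2*ρ)^2) :=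
      deriv_AREFF hhalf
    have hsq : (0:ℝ) < (1-2*ρ)^2 := by nlinarith
    constructor
    · intro h0
      rw [hd] at h0
      have hz : hfun ρ = 0 := by
        rcases mul_eq_zero.1 h0 with h | h
        · exact absurd h (Real.exp_pos _).ne'
        · rcases div_eq_zero_iff.1 h with h' | h'
          · exact h'
          · exact absurd h' hsq.ne'
      exact h_anti.injOn (mem_Iio.2 hhalf) (mem_Iio.2 hρc_half) (hz.trans hroot.symm)
    · rintro rfl
      rw [hd, hroot]
      simp
  · intro ρ hρ
    have hhalf : ρ < 1/2 := by linarith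
    have key : Gfun ρ ≤ Gfun ρc := by
      rcases lt_trichotomy ρ ρc with hlt | rfl | hgt
      · have mono : StrictMonoOn Gfun (Iic ρc) := by
          apply strictMonoOn_of_deriv_pos (convex_Iic _)
          · exact fun x hx =>
              (hasDerivAt_G (lt_of_le_of_lt hx hρc_half)).continuousAt.continuousWithinAt
          · intro x hx
            rw [interior_Iic] at hx
            have hxh : x < 1/2 := lt_trans hx hρc_half
            rw [(hasDerivAt_G hxh).deriv]
            have hpos : 0 < hfun x := by
              have := h_anti (mem_Iio.2 hxh) (mem_Iio.2 hρc_half) hx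
              rw [hroot] at this; exact this
            exact div_pos hpos (by nlinarith)
        exact (mono (mem_Iic.2 hlt.le) (mem_Iic.2 le_rfl) hlt).le
      · exact le_rfl
      · have anti : StrictAntiOn Gfun (Icc ρc 0) := by
          apply strictAntiOn_of_deriv_neg (convex_Icc _ _)
          · exact fun x hx =>
              (hasDerivAt_G (lt_of_le_of_lt hx.2 (by norm_num))).continuousAt.continuousWithinAt
          · intro x hx
            rw [interior_Icc] at hx
            have hxh : x < 1/2 := lt_trans hx.2 (by norm_num)
            rw [(hasDerivAt_G hxh).deriv]
            have hneg : hfun x < 0 := by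
              have := h_anti (mem_Iio.2 hρc_half) (mem_Iio.2 hxh) hx.1
              rw [hroot] at this; exact this
            exact div_neg_of_neg_of_pos hneg (by nlinarith)
        exact (anti ⟨le_rfl, hρc_neg.le⟩ ⟨hgt.le, hρ.le⟩ hgt).le
    calc AREFF ρ = Real.exp (Gfun ρ) := AREFF_eq hhalf
      _ ≤ Real.exp (Gfun ρc) := Real.exp_le_exp.2 key
      _ = AREFF ρc := (AREFF_eq hρc_half).symm
end
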